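/- arXiv:2006.02669 — 2 statements merged into one kernel-verified Lean document; each statement's English description precedes it below -/
import Mathlib

section
/- Let α ∈ [0,1], ρ > 0, and let a₀(n), a₁(n) be real sequences. Then for every n ≥ 2 and every x ∈ [0,1]: (i) J_{n,α,ρ}^{M,1}(e₀;x) = 2a₀(n)+a₁(n), and (ii) J_{n,α,ρ}^{M,1}(e₁;x) = (2a₀(n)+a₁(n))x + (1/(nρ+2))·(1−2x)(a₀(n)(ρ+2)+a₁(n)(ρ+1)), where e_i(t) = t^i. -/
open MeasureTheory Finset Filter

noncomputable def bin (m : ℕ) (j : ℤ) : ℝ :=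
  if 0 ≤ j ∧ j ≤ (m : ℤ) then (m.choose j.toNat : ℝ) else 0

/-- The α-Bernstein basis polynomial `p_{n,k}^α(x)` (with `k : ℤ`, vanishing out of range). -/
noncomputable def bp (α : ℝ) (n : ℕ) (k : ℤ) (x : ℝ) : ℝ :=
  if n = 1 then (if k = 0 then 1 - x else if k = 1 then x else 0)
  else
    (1 - α) * (bin (n - 2) k * x ^ k.toNat * (1 - x) ^ (n - 1 - k.toNat)
      + bin (n - 2) (k - 2) * x ^ (k.toNat - 1) * (1 - x) ^ (n - k.toNat))
    + α * bin n k * x ^ k.toNat * (1 - x) ^ (n - k.toNat)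

/-- Euler Beta function. -/
noncomputable def betaFn (a b : ℝ) : ℝ := Real.Gamma a * Real.Gamma b / Real.Gamma (a + b)

/-- The Pălțănea kernel `μ_{n,k}^ρ(t)`. -/
noncomputable def pal (ρ : ℝ) (n k : ℕ) (t : ℝ) : ℝ :=
  t ^ ((k : ℝ) * ρ) * (1 - t) ^ (((n : ℝ) - (k : ℝ)) * ρ)
    / betaFn ((k : ℝ) * ρ + 1) (((n : ℝ) - (k : ℝ)) * ρ + 1)

/-- First-order modified α-Bernstein–Pălțănea operator `J_{n,α,ρ}^{M,1}(f;x)`. -/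
noncomputable def J1 (α ρ : ℝ) (a0 a1 : ℕ → ℝ) (n : ℕ) (f : ℝ → ℝ) (x : ℝ) : ℝ :=
  ∑ k ∈ Finset.range (n + 1),
    ((a1 n * x + a0 n) * bp α (n - 1) (k : ℤ) x
      + (a1 n * (1 - x) + a0 n) * bp α (n - 1) ((k : ℤ) - 1) x)
    * ∫ t in (0:ℝ)..1, pal ρ n k t * f t

lemma real_beta {a b : ℝ} (ha : 0 < a) (hb : 0 < b) :
    ∫ t in (0:ℝ)..1, t ^ (a-1) * (1-t) ^ (b-1) = betaFn a b := by
  have h := Complex.Gamma_mul_Gamma_eq_betaIntegral (s := (a:ℂ)) (t := (b:ℂ))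
    (by simpa using ha) (by simpa using hb)
  have hI : Complex.betaIntegral (a:ℂ) (b:ℂ)
      = ((∫ t in (0:ℝ)..1, t ^ (a-1) * (1-t) ^ (b-1) : ℝ) : ℂ) := by
    rw [Complex.betaIntegral, ← intervalIntegral.integral_ofReal]
    apply intervalIntegral.integral_congr
    intro t ht
    rw [Set.uIcc_of_le (by norm_num : (0:ℝ) ≤ 1)] at ht
    simp only []
    show (t:ℂ) ^ ((a:ℂ)-1) * (1-(t:ℂ)) ^ ((b:ℂ)-1) = ((t ^ (a-1) * (1-t) ^ (b-1) : ℝ) : ℂ)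
    rw [Complex.ofReal_mul, Complex.ofReal_cpow ht.1, Complex.ofReal_cpow (by linarith [ht.2] : (0:ℝ) ≤ 1 - t)]
    push_cast
    ring
  rw [hI] at h
  rw [← Complex.ofReal_add, Complex.Gamma_ofReal, Complex.Gamma_ofReal, Complex.Gamma_ofReal] at h
  have h' : Real.Gamma a * Real.Gamma b
      = Real.Gamma (a+b) * ∫ t in (0:ℝ)..1, t ^ (a-1) * (1-t) ^ (b-1) := by exact_mod_cast h
  have hG : Real.Gamma (a+b) ≠ 0 := (Real.Gamma_pos_of_pos (by linarith)).ne'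
  rw [betaFn, eq_div_iff hG]
  linarith [h']

lemma betaFn_pos {a b : ℝ} (ha : 0 < a) (hb : 0 < b) : 0 < betaFn a b :=
  div_pos (mul_pos (Real.Gamma_pos_of_pos ha) (Real.Gamma_pos_of_pos hb))
    (Real.Gamma_pos_of_pos (by linarith))

lemma beta_int {a b : ℝ} (ha : 0 ≤ a) (hb : 0 ≤ b) :
    ∫ t in (0:ℝ)..1, t ^ a * (1-t) ^ b = betaFn (a+1) (b+1) := by
  have := real_beta (a := a+1) (b := b+1) (by linarith) (by linarith)
  simpa using this

lemma beta_ratio {a b : ℝ} (ha : 0 ≤ a) (hb : 0 ≤ b) :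
    betaFn (a+2) (b+1) = (a+1) / (a+b+2) * betaFn (a+1) (b+1) := by
  have h1 : Real.Gamma (a+2) = (a+1) * Real.Gamma (a+1) := by
    rw [show a+2 = (a+1)+1 by ring, Real.Gamma_add_one (by linarith)]
  have h2 : Real.Gamma (a+2+(b+1)) = (a+b+2) * Real.Gamma (a+1+(b+1)) := by
    rw [show a+2+(b+1) = (a+b+2)+1 by ring, Real.Gamma_add_one (by linarith),
      show a+1+(b+1) = a+b+2 by ring]
  have hG : Real.Gamma (a+1+(b+1)) ≠ 0 := (Real.Gamma_pos_of_pos (by linarith)).ne'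
  rw [betaFn, betaFn, h1, h2]
  field_simp

lemma pal_int_const {ρ : ℝ} (hρ : 0 < ρ) {n k : ℕ} (hk : k ≤ n) :
    ∫ t in (0:ℝ)..1, pal ρ n k t = 1 := by
  have ha : (0:ℝ) ≤ (k:ℝ) * ρ := by positivity
  have hb : (0:ℝ) ≤ ((n:ℝ)-(k:ℝ)) * ρ :=
    mul_nonneg (sub_nonneg.2 (by exact_mod_cast hk)) hρ.le
  unfold pal
  rw [intervalIntegral.integral_div, beta_int ha hb,
    div_self (betaFn_pos (by linarith) (by linarith)).ne']

lemma pal_int_id {ρ : ℝ} (hρ : 0 < ρ) {n k : ℕ} (hk : k ≤ n) :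
    ∫ t in (0:ℝ)..1, pal ρ n k t * t = ((k:ℝ)*ρ+1)/((n:ℝ)*ρ+2) := by
  have ha : (0:ℝ) ≤ (k:ℝ) * ρ := by positivity
  have hb : (0:ℝ) ≤ ((n:ℝ)-(k:ℝ)) * ρ :=
    mul_nonneg (sub_nonneg.2 (by exact_mod_cast hk)) hρ.le
  set a := (k:ℝ) * ρ with hadef
  set b := ((n:ℝ)-(k:ℝ)) * ρ with hbdef
  have key : ∫ t in (0:ℝ)..1, pal ρ n k t * t
      = (∫ t in (0:ℝ)..1, t ^ (a+1) * (1-t) ^ b) / betaFn (a+1) (b+1) := by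
    rw [← intervalIntegral.integral_div]
    apply intervalIntegral.integral_congr
    intro t ht
    rw [Set.uIcc_of_le (by norm_num : (0:ℝ) ≤ 1)] at ht
    show pal ρ n k t * t = t ^ (a+1) * (1-t) ^ b / betaFn (a+1) (b+1)
    rw [pal]
    rcases eq_or_lt_of_le ht.1 with h0 | h0
    · rw [← h0]
      rw [Real.zero_rpow (by linarith : a + 1 ≠ 0)]
      rcases eq_or_lt_of_le ha with h1 | h1
      · rw [hadef] at h1 ⊢
        rw [← h1, Real.rpow_zero]
        ring
      · rw [hadef] at h1 ⊢
        rw [Real.zero_rpow h1.ne']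
        ring
    · rw [Real.rpow_add_one h0.ne']
      ring
  have h2 : ∫ t in (0:ℝ)..1, t ^ (a+1) * (1-t) ^ b = betaFn (a+2) (b+1) := by
    have := beta_int (a := a+1) (b := b) (by linarith) hb
    rw [this]
    ring_nf
  rw [key, h2, beta_ratio ha hb]
  have hB : betaFn (a+1) (b+1) ≠ 0 := (betaFn_pos (by linarith) (by linarith)).ne'
  rw [mul_div_assoc, div_self hB, mul_one]
  have hab : a + b = (n:ℝ) * ρ := by rw [hadef, hbdef]; ring
  rw [show a+b+2 = (n:ℝ)*ρ+2 by rw [← hab]]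

lemma bern_sum (x : ℝ) (q : ℕ) :
    ∑ k ∈ range (q+1), (q.choose k : ℝ) * x^k * (1-x)^(q-k) = 1 := by
  have h : (x + (1-x))^q = ∑ k ∈ range (q+1), x^k * (1-x)^(q-k) * (q.choose k : ℝ) :=
    add_pow x (1-x) q
  simp only [add_sub_cancel, one_pow] at h
  rw [show ∑ k ∈ range (q+1), (q.choose k : ℝ) * x^k * (1-x)^(q-k)
      = ∑ k ∈ range (q+1), x^k * (1-x)^(q-k) * (q.choose k : ℝ) from
    Finset.sum_congr rfl fun k _ => by ring]
  exact h.symm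

lemma bern_mom (x : ℝ) (q : ℕ) :
    ∑ k ∈ range (q+1), (k:ℝ) * ((q.choose k : ℝ) * x^k * (1-x)^(q-k)) = q * x := by
  have h := congrArg (Polynomial.eval x) (bernsteinPolynomial.sum_smul ℝ q)
  simp [Polynomial.eval_finset_sum, bernsteinPolynomial] at h
  rw [← h]

lemma bern_sum_pad (x : ℝ) (q N : ℕ) (h : q+1 ≤ N) :
    ∑ k ∈ range N, (q.choose k : ℝ) * x^k * (1-x)^(q-k) = 1 := by
  rw [← Finset.sum_subset (Finset.range_subset_range.mpr h) ?_]
  · exact bern_sum x q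
  · intro k _ hk
    have hq : q < k := by simpa using hk
    simp [Nat.choose_eq_zero_of_lt hq]

lemma bern_mom_pad (x : ℝ) (q N : ℕ) (h : q+1 ≤ N) :
    ∑ k ∈ range N, (k:ℝ) * ((q.choose k : ℝ) * x^k * (1-x)^(q-k)) = q * x := by
  rw [← Finset.sum_subset (Finset.range_subset_range.mpr h) ?_]
  · exact bern_mom x q
  · intro k _ hk
    have hq : q < k := by simpa using hk
    simp [Nat.choose_eq_zero_of_lt hq]

lemma bin_nat (q k : ℕ) : bin q (k:ℤ) = (q.choose k : ℝ) := by
  unfold bin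
  split_ifs with h
  · simp
  · push_neg at h
    have : q < k := by omega
    simp [Nat.choose_eq_zero_of_lt this]

lemma bin_neg {q : ℕ} {j : ℤ} (hj : j < 0) : bin q j = 0 := by
  unfold bin; rw [if_neg (by omega)]

lemma bin_gt {q : ℕ} {j : ℤ} (hj : (q:ℤ) < j) : bin q j = 0 := by
  unfold bin; rw [if_neg (by omega)]

lemma bp_expand (α x : ℝ) (q k : ℕ) :
    bp α (q+2) (k:ℤ) x
      = (1 - α) * ((q.choose k : ℝ) * x^k * (1-x)^(q+1-k)
          + bin q ((k:ℤ)-2) * x^(k-1) * (1-x)^(q+2-k))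
        + α * ((q+2).choose k : ℝ) * x^k * (1-x)^(q+2-k) := by
  unfold bp
  rw [if_neg (by omega)]
  simp [bin_nat, show q+2-2 = q from rfl, show q+2-1 = q+1 from rfl]

lemma sum_bp_two (α x : ℝ) (q : ℕ) :
    ∑ k ∈ range (q+4), bp α (q+2) (k:ℤ) x = 1 := by
  have hA : ∑ k ∈ range (q+4), (q.choose k : ℝ) * x^k * (1-x)^(q+1-k) = 1-x := by
    have he : ∀ k ∈ range (q+4), (q.choose k : ℝ) * x^k * (1-x)^(q+1-k)
        = (1-x) * ((q.choose k : ℝ) * x^k * (1-x)^(q-k)) := by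
      intro k _
      by_cases hk : k ≤ q
      · rw [show q+1-k = (q-k)+1 by omega]; ring
      · simp [Nat.choose_eq_zero_of_lt (by omega : q < k)]
    rw [Finset.sum_congr rfl he, ← Finset.mul_sum, bern_sum_pad x q _ (by omega), mul_one]
  have hB : ∑ k ∈ range (q+4), bin q ((k:ℤ)-2) * x^(k-1) * (1-x)^(q+2-k) = x := by
    rw [Finset.sum_range_succ', Finset.sum_range_succ']
    simp only [Nat.cast_zero, Nat.cast_add, Nat.cast_one]
    rw [show (0:ℤ)-2 = -2 by norm_num, show (0:ℤ)+1-2 = -1 by norm_num,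
      bin_neg (by norm_num : (-2:ℤ) < 0), bin_neg (by norm_num : (-1:ℤ) < 0)]
    have he : ∀ k ∈ range (q+2), bin q ((k:ℤ) + 1 + 1 - 2) * x^((k+1+1)-1) * (1-x)^(q+2-(k+1+1))
        = x * ((q.choose k : ℝ) * x^k * (1-x)^(q-k)) := by
      intro k _
      have : (k:ℤ) + 1 + 1 - 2 = (k:ℤ) := by ring
      rw [this, bin_nat, show (k+1+1)-1 = k+1 from rfl, show q+2-(k+1+1) = q-k by omega]
      ring
    rw [Finset.sum_congr rfl he, ← Finset.mul_sum, bern_sum_pad x q _ (by omega)]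
    ring
  have hC : ∑ k ∈ range (q+4), ((q+2).choose k : ℝ) * x^k * (1-x)^(q+2-k) = 1 :=
    bern_sum_pad x (q+2) _ (by omega)
  calc ∑ k ∈ range (q+4), bp α (q+2) (k:ℤ) x
      = ∑ k ∈ range (q+4), ((1-α) * ((q.choose k : ℝ) * x^k * (1-x)^(q+1-k))
          + ((1-α) * (bin q ((k:ℤ)-2) * x^(k-1) * (1-x)^(q+2-k))
          + α * (((q+2).choose k : ℝ) * x^k * (1-x)^(q+2-k)))) := by
        apply Finset.sum_congr rfl; intro k _; rw [bp_expand]; ring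
    _ = 1 := by
        rw [Finset.sum_add_distrib, Finset.sum_add_distrib,
          ← Finset.mul_sum, ← Finset.mul_sum, ← Finset.mul_sum, hA, hB, hC]
        ring

lemma mom_bp_two (α x : ℝ) (q : ℕ) :
    ∑ k ∈ range (q+4), (k:ℝ) * bp α (q+2) (k:ℤ) x = ((q:ℝ)+2) * x := by
  have hA : ∑ k ∈ range (q+4), (k:ℝ) * ((q.choose k : ℝ) * x^k * (1-x)^(q+1-k))
      = (1-x) * ((q:ℝ) * x) := by
    have he : ∀ k ∈ range (q+4), (k:ℝ) * ((q.choose k : ℝ) * x^k * (1-x)^(q+1-k))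
        = (1-x) * ((k:ℝ) * ((q.choose k : ℝ) * x^k * (1-x)^(q-k))) := by
      intro k _
      by_cases hk : k ≤ q
      · rw [show q+1-k = (q-k)+1 by omega]; ring
      · simp [Nat.choose_eq_zero_of_lt (by omega : q < k)]
    rw [Finset.sum_congr rfl he, ← Finset.mul_sum, bern_mom_pad x q _ (by omega)]
  have hB : ∑ k ∈ range (q+4), (k:ℝ) * (bin q ((k:ℤ)-2) * x^(k-1) * (1-x)^(q+2-k))
      = x * ((q:ℝ) * x) + 2 * x := by
    rw [Finset.sum_range_succ', Finset.sum_range_succ']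
    simp only [Nat.cast_zero, Nat.cast_add, Nat.cast_one]
    rw [show (0:ℤ)-2 = -2 by norm_num, show (0:ℤ)+1-2 = -1 by norm_num,
      bin_neg (by norm_num : (-2:ℤ) < 0), bin_neg (by norm_num : (-1:ℤ) < 0)]
    have he : ∀ k ∈ range (q+2),
        ((k:ℝ)+1+1) * (bin q ((k:ℤ) + 1 + 1 - 2) * x^((k+1+1)-1) * (1-x)^(q+2-(k+1+1)))
        = x * ((k:ℝ) * ((q.choose k : ℝ) * x^k * (1-x)^(q-k)))
          + (2*x) * ((q.choose k : ℝ) * x^k * (1-x)^(q-k)) := by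
      intro k _
      have h1 : (k:ℤ) + 1 + 1 - 2 = (k:ℤ) := by ring
      rw [h1, bin_nat, show (k+1+1)-1 = k+1 from rfl, show q+2-(k+1+1) = q-k by omega]
      ring
    rw [Finset.sum_congr rfl he, Finset.sum_add_distrib, ← Finset.mul_sum, ← Finset.mul_sum,
      bern_mom_pad x q _ (by omega), bern_sum_pad x q _ (by omega)]
    ring
  have hC : ∑ k ∈ range (q+4), (k:ℝ) * (((q+2).choose k : ℝ) * x^k * (1-x)^(q+2-k))
      = ((q:ℝ)+2) * x := by
    have := bern_mom_pad x (q+2) (q+4) (by omega)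
    push_cast at this ⊢
    exact this
  calc ∑ k ∈ range (q+4), (k:ℝ) * bp α (q+2) (k:ℤ) x
      = ∑ k ∈ range (q+4), ((1-α) * ((k:ℝ) * ((q.choose k : ℝ) * x^k * (1-x)^(q+1-k)))
          + ((1-α) * ((k:ℝ) * (bin q ((k:ℤ)-2) * x^(k-1) * (1-x)^(q+2-k)))
          + α * ((k:ℝ) * (((q+2).choose k : ℝ) * x^k * (1-x)^(q+2-k))))) := by
        apply Finset.sum_congr rfl; intro k _; rw [bp_expand]; ring
    _ = ((q:ℝ)+2) * x := by
        rw [Finset.sum_add_distrib, Finset.sum_add_distrib,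
          ← Finset.mul_sum, ← Finset.mul_sum, ← Finset.mul_sum, hA, hB, hC]
        ring

lemma bp_neg_one (α x : ℝ) (m : ℕ) : bp α m (-1) x = 0 := by
  unfold bp
  rcases eq_or_ne m 1 with h | h
  · simp [h]
  · rw [if_neg h, bin_neg (by norm_num : (-1:ℤ) < 0), bin_neg (by norm_num : (-1:ℤ)-2 < 0),
      bin_neg (by norm_num : (-1:ℤ) < 0)]
    ring

lemma bp_top (α x : ℝ) (m : ℕ) (hm : 1 ≤ m) : bp α m ((m:ℤ)+1) x = 0 := by
  unfold bp
  rcases eq_or_ne m 1 with h | h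
  · subst h; norm_num
  · have hm2 : 2 ≤ m := by omega
    rw [if_neg h, bin_gt (by push_cast [Nat.cast_sub hm2]; omega : ((m-2:ℕ):ℤ) < (m:ℤ)+1),
      bin_gt (by push_cast [Nat.cast_sub hm2]; omega : ((m-2:ℕ):ℤ) < (m:ℤ)+1-2),
      bin_gt (by omega : (m:ℤ) < (m:ℤ)+1)]
    ring

lemma sum_bp (α x : ℝ) (m : ℕ) (hm : 1 ≤ m) :
    ∑ k ∈ range (m+2), bp α m (k:ℤ) x = 1 := by
  rcases eq_or_lt_of_le hm with h1 | h1
  · rw [← h1]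
    norm_num [Finset.sum_range_succ, bp]
  · obtain ⟨q, rfl⟩ : ∃ q, m = q+2 := ⟨m-2, by omega⟩
    exact sum_bp_two α x q

lemma mom_bp (α x : ℝ) (m : ℕ) (hm : 1 ≤ m) :
    ∑ k ∈ range (m+2), (k:ℝ) * bp α m (k:ℤ) x = (m:ℝ) * x := by
  rcases eq_or_lt_of_le hm with h1 | h1
  · rw [← h1]
    norm_num [Finset.sum_range_succ, bp]
  · obtain ⟨q, rfl⟩ : ∃ q, m = q+2 := ⟨m-2, by omega⟩
    have := mom_bp_two α x q
    push_cast at this ⊢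
    exact this

lemma sum_bp_trunc (α x : ℝ) (m : ℕ) (hm : 1 ≤ m) :
    ∑ k ∈ range (m+1), bp α m (k:ℤ) x = 1 := by
  have h := sum_bp α x m hm
  rw [show m+2 = (m+1)+1 from rfl, Finset.sum_range_succ,
    show ((m+1:ℕ):ℤ) = (m:ℤ)+1 by push_cast; ring, bp_top α x m hm] at h
  linarith

lemma mom_bp_trunc (α x : ℝ) (m : ℕ) (hm : 1 ≤ m) :
    ∑ k ∈ range (m+1), (k:ℝ) * bp α m (k:ℤ) x = (m:ℝ) * x := by
  have h := mom_bp α x m hm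
  rw [show m+2 = (m+1)+1 from rfl, Finset.sum_range_succ,
    show ((m+1:ℕ):ℤ) = (m:ℤ)+1 by push_cast; ring, bp_top α x m hm] at h
  linarith

lemma sum_bp_shift (α x : ℝ) (m : ℕ) (hm : 1 ≤ m) :
    ∑ k ∈ range (m+2), bp α m ((k:ℤ)-1) x = 1 := by
  rw [Finset.sum_range_succ']
  simp only [Nat.cast_add, Nat.cast_one, Nat.cast_zero, add_sub_cancel_right, zero_sub]
  rw [bp_neg_one, sum_bp_trunc α x m hm]
  ring

lemma mom_bp_shift (α x : ℝ) (m : ℕ) (hm : 1 ≤ m) :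
    ∑ k ∈ range (m+2), (k:ℝ) * bp α m ((k:ℤ)-1) x = (m:ℝ) * x + 1 := by
  rw [Finset.sum_range_succ']
  simp only [Nat.cast_add, Nat.cast_one, Nat.cast_zero, add_sub_cancel_right, zero_sub]
  rw [bp_neg_one]
  have he : ∀ k ∈ range (m+1), ((k:ℝ)+1) * bp α m (k:ℤ) x
      = (k:ℝ) * bp α m (k:ℤ) x + bp α m (k:ℤ) x := by
    intro k _; ring
  rw [Finset.sum_congr rfl he, Finset.sum_add_distrib, mom_bp_trunc α x m hm,
    sum_bp_trunc α x m hm]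
  ring


theorem stmt_0 (α ρ : ℝ) (hα : α ∈ Set.Icc (0:ℝ) 1) (hρ : 0 < ρ)
    (a0 a1 : ℕ → ℝ) (n : ℕ) (hn : 2 ≤ n) (x : ℝ) (hx : x ∈ Set.Icc (0:ℝ) 1) :
    J1 α ρ a0 a1 n (fun _ => (1:ℝ)) x = 2 * a0 n + a1 n ∧
    J1 α ρ a0 a1 n (fun t => t) x
      = (2 * a0 n + a1 n) * x
        + (1 / ((n : ℝ) * ρ + 2))
          * ((1 - 2 * x) * (a0 n * (ρ + 2) + a1 n * (ρ + 1))) := by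
  obtain ⟨m, rfl⟩ : ∃ m, n = m + 1 := ⟨n - 1, by omega⟩
  have hm : 1 ≤ m := by omega
  set c1 := a1 (m+1) * x + a0 (m+1) with hc1
  set c2 := a1 (m+1) * (1 - x) + a0 (m+1) with hc2
  have hD : (0:ℝ) < ((m+1:ℕ):ℝ) * ρ + 2 := by positivity
  constructor
  · unfold J1
    have step : ∀ k ∈ range (m+1+1),
        ((a1 (m+1) * x + a0 (m+1)) * bp α (m+1-1) (k:ℤ) x
          + (a1 (m+1) * (1-x) + a0 (m+1)) * bp α (m+1-1) ((k:ℤ)-1) x)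
          * (∫ t in (0:ℝ)..1, pal ρ (m+1) k t * (fun _ => (1:ℝ)) t)
        = c1 * bp α m (k:ℤ) x + c2 * bp α m ((k:ℤ)-1) x := by
      intro k hk
      have hk' : k ≤ m+1 := by
        have := Finset.mem_range.mp hk; omega
      have hint : (∫ t in (0:ℝ)..1, pal ρ (m+1) k t * (fun _ => (1:ℝ)) t) = 1 := by
        simpa using pal_int_const hρ hk'
      rw [hint, mul_one, show m+1-1 = m from rfl, hc1, hc2]
    rw [Finset.sum_congr rfl step, Finset.sum_add_distrib, ← Finset.mul_sum, ← Finset.mul_sum,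
      sum_bp α x m hm, sum_bp_shift α x m hm]
    rw [hc1, hc2]; ring
  · unfold J1
    have step : ∀ k ∈ range (m+1+1),
        ((a1 (m+1) * x + a0 (m+1)) * bp α (m+1-1) (k:ℤ) x
          + (a1 (m+1) * (1-x) + a0 (m+1)) * bp α (m+1-1) ((k:ℤ)-1) x)
          * (∫ t in (0:ℝ)..1, pal ρ (m+1) k t * t)
        = (ρ / (((m+1:ℕ):ℝ) * ρ + 2) * c1) * ((k:ℝ) * bp α m (k:ℤ) x)
          + ((ρ / (((m+1:ℕ):ℝ) * ρ + 2) * c2) * ((k:ℝ) * bp α m ((k:ℤ)-1) x)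
          + ((1 / (((m+1:ℕ):ℝ) * ρ + 2) * c1) * bp α m (k:ℤ) x
          + (1 / (((m+1:ℕ):ℝ) * ρ + 2) * c2) * bp α m ((k:ℤ)-1) x)) := by
      intro k hk
      have hk' : k ≤ m+1 := by
        have := Finset.mem_range.mp hk; omega
      have hint : (∫ t in (0:ℝ)..1, pal ρ (m+1) k t * t)
          = ((k:ℝ)*ρ+1) / (((m+1:ℕ):ℝ)*ρ+2) := pal_int_id hρ hk'
      rw [hint, show m+1-1 = m from rfl, hc1, hc2]
      field_simp
      ring
    rw [Finset.sum_congr rfl step, Finset.sum_add_distrib, Finset.sum_add_distrib,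
      Finset.sum_add_distrib, ← Finset.mul_sum, ← Finset.mul_sum, ← Finset.mul_sum,
      ← Finset.mul_sum, mom_bp α x m hm, mom_bp_shift α x m hm,
      sum_bp α x m hm, sum_bp_shift α x m hm]
    rw [hc1, hc2]
    have hD' : ((m+1:ℕ):ℝ) * ρ + 2 ≠ 0 := hD.ne'
    push_cast at hD' ⊢
    field_simp
    ring
end

section
/- Let α ∈ [0,1] and ρ > 0. There exists a constant C > 0 (depending only on α and ρ) such that for every n ≥ 2 and every x ∈ [0,1], Σ_{k=0}^{n−1} p_{n−1,k}^α(x)·∫₀¹ μ_{n,k}^ρ(t)|t−x| dt ≤ C/√n and Σ_{k=0}^{n−1} p_{n−1,k}^α(x)·∫₀¹ μ_{n,k+1}^ρ(t)|t−x| dt ≤ C/√n. -/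
open MeasureTheory Finset Filter


noncomputable def Bb (m k : ℕ) (x : ℝ) : ℝ := (m.choose k : ℝ) * x ^ k * (1 - x) ^ (m - k)

lemma Bb_nonneg {m k : ℕ} {x : ℝ} (hx : x ∈ Set.Icc (0:ℝ) 1) : 0 ≤ Bb m k x := by
  obtain ⟨h0, h1⟩ := hx
  have h2 : (0:ℝ) ≤ 1 - x := by linarith
  unfold Bb
  positivity

lemma Bb_sum (m : ℕ) (x : ℝ) : ∑ k ∈ Finset.range (m + 1), Bb m k x = 1 := by
  have h := add_pow x (1 - x) m
  simp only [add_sub_cancel, one_pow] at h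
  rw [h]
  apply Finset.sum_congr rfl
  intro k _
  unfold Bb
  ring

lemma Bb_var (m : ℕ) (x : ℝ) :
    ∑ k ∈ Finset.range (m + 1), Bb m k x * ((k:ℝ) - (m:ℝ) * x) ^ 2
      = (m:ℝ) * x * (1 - x) := by
  have h := congrArg (Polynomial.eval x) (bernsteinPolynomial.variance (R := ℝ) m)
  simp only [Polynomial.eval_finset_sum, Polynomial.eval_mul, Polynomial.eval_pow,
    Polynomial.eval_sub, Polynomial.eval_natCast, Polynomial.eval_X, Polynomial.eval_one,
    bernsteinPolynomial, Polynomial.eval_smul, smul_eq_mul, nsmul_eq_mul] at h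
  rw [← h]
  apply Finset.sum_congr rfl
  intro k _
  unfold Bb
  ring


lemma bin_natCast (m k : ℕ) : bin m (k:ℤ) = (m.choose k : ℝ) := by
  unfold bin
  split_ifs with h
  · simp
  · have hk : m < k := by omega
    rw [Nat.choose_eq_zero_of_lt hk]
    simp

lemma bp_eq {α x : ℝ} {m k : ℕ} (hm : 2 ≤ m) (hk : k ≤ m) :
    bp α m (k:ℤ) x
      = (1 - α) * ((1 - x) * Bb (m - 2) k x
          + x * (if 2 ≤ k then Bb (m - 2) (k - 2) x else 0))
        + α * Bb m k x := by
  unfold bp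
  rw [if_neg (by omega)]
  have e1 : bin (m - 2) (k:ℤ) * x ^ (k:ℤ).toNat * (1 - x) ^ (m - 1 - (k:ℤ).toNat)
      = (1 - x) * Bb (m - 2) k x := by
    simp only [Int.toNat_natCast]
    rw [bin_natCast]
    unfold Bb
    rcases le_or_gt k (m - 2) with h | h
    · rw [show m - 1 - k = (m - 2 - k) + 1 by omega, pow_succ]
      ring
    · rw [Nat.choose_eq_zero_of_lt h]
      simp
  have e2 : bin (m - 2) ((k:ℤ) - 2) * x ^ ((k:ℤ).toNat - 1) * (1 - x) ^ (m - (k:ℤ).toNat)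
      = x * (if 2 ≤ k then Bb (m - 2) (k - 2) x else 0) := by
    simp only [Int.toNat_natCast]
    rcases le_or_gt 2 k with h | h
    · rw [if_pos h, show ((k:ℤ) - 2) = (((k - 2 : ℕ)):ℤ) by omega, bin_natCast]
      unfold Bb
      rcases le_or_gt (k - 2) (m - 2) with h' | h'
      · rw [show k - 1 = (k - 2) + 1 by omega, show m - k = (m - 2) - (k - 2) by omega,
          pow_succ]
        ring
      · rw [Nat.choose_eq_zero_of_lt h']
        simp
    · have hb0 : bin (m - 2) ((k:ℤ) - 2) = 0 := by
        unfold bin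
        rw [if_neg (by omega)]
      rw [hb0, if_neg (by omega)]
      simp
  rw [e1, e2, bin_natCast]
  unfold Bb
  simp only [Int.toNat_natCast]
  ring

lemma bp_sum_f {α x : ℝ} {m : ℕ} (hm : 2 ≤ m) (f : ℕ → ℝ) :
    ∑ k ∈ Finset.range (m + 1), bp α m (k:ℤ) x * f k
      = (1 - α) * ((1 - x) * ∑ k ∈ Finset.range (m - 1), Bb (m - 2) k x * f k
          + x * ∑ k ∈ Finset.range (m - 1), Bb (m - 2) k x * f (k + 2))
        + α * ∑ k ∈ Finset.range (m + 1), Bb m k x * f k := by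
  have step1 : ∑ k ∈ Finset.range (m + 1), bp α m (k:ℤ) x * f k
      = (1 - α) * (1 - x) * (∑ k ∈ Finset.range (m + 1), Bb (m - 2) k x * f k)
        + (1 - α) * x * (∑ k ∈ Finset.range (m + 1),
            (if 2 ≤ k then Bb (m - 2) (k - 2) x else 0) * f k)
        + α * ∑ k ∈ Finset.range (m + 1), Bb m k x * f k := by
    rw [Finset.mul_sum, Finset.mul_sum, Finset.mul_sum, ← Finset.sum_add_distrib,
      ← Finset.sum_add_distrib]
    apply Finset.sum_congr rfl
    intro k hk
    rw [bp_eq hm (by simpa using Nat.lt_succ_iff.mp (Finset.mem_range.mp hk))]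
    ring
  have h1 : ∑ k ∈ Finset.range (m + 1), Bb (m - 2) k x * f k
      = ∑ k ∈ Finset.range (m - 1), Bb (m - 2) k x * f k := by
    symm
    apply Finset.sum_subset (Finset.range_subset_range.mpr (by omega))
    intro k _ hk
    have : m - 2 < k := by
      simp only [Finset.mem_range, not_lt] at hk
      omega
    unfold Bb
    rw [Nat.choose_eq_zero_of_lt this]
    simp
  have h2 : ∑ k ∈ Finset.range (m + 1), (if 2 ≤ k then Bb (m - 2) (k - 2) x else 0) * f k
      = ∑ k ∈ Finset.range (m - 1), Bb (m - 2) k x * f (k + 2) := by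
    rw [Finset.range_eq_Ico,
      ← Finset.sum_Ico_consecutive (fun k => (if 2 ≤ k then Bb (m - 2) (k - 2) x else 0) * f k)
        (by omega : 0 ≤ 2) (by omega : 2 ≤ m + 1)]
    have hz : ∑ k ∈ Finset.Ico 0 2, (if 2 ≤ k then Bb (m - 2) (k - 2) x else 0) * f k = 0 := by
      rw [Finset.sum_Ico_eq_sum_range]
      rw [show (2:ℕ) - 0 = 2 from rfl, Finset.sum_range_succ, Finset.sum_range_succ,
        Finset.sum_range_zero]
      norm_num
    rw [hz, zero_add, Finset.sum_Ico_eq_sum_range]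
    have hcard : m + 1 - 2 = m - 1 := by omega
    rw [hcard]
    apply Finset.sum_congr rfl
    intro i _
    rw [if_pos (by omega : 2 ≤ 2 + i), show 2 + i - 2 = i by omega, show 2 + i = i + 2 by omega]
  rw [step1, h1, h2]
  ring

lemma Bb_first (M : ℕ) (x : ℝ) :
    ∑ k ∈ Finset.range (M + 1), Bb M k x * (k:ℝ) = (M:ℝ) * x := by
  have h := congrArg (Polynomial.eval x) (bernsteinPolynomial.sum_smul (R := ℝ) M)
  simp only [Polynomial.eval_finset_sum, Polynomial.eval_smul, smul_eq_mul, nsmul_eq_mul,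
    Polynomial.eval_mul, Polynomial.eval_X, Polynomial.eval_natCast,
    bernsteinPolynomial, Polynomial.eval_pow, Polynomial.eval_sub, Polynomial.eval_one] at h
  rw [← h]
  apply Finset.sum_congr rfl
  intro k _
  unfold Bb
  ring

lemma Bb_quad (M : ℕ) (x d : ℝ) :
    ∑ k ∈ Finset.range (M + 1), Bb M k x * ((k:ℝ) - (M:ℝ) * x + d) ^ 2
      = (M:ℝ) * x * (1 - x) + d ^ 2 := by
  have e : ∀ k : ℕ, Bb M k x * ((k:ℝ) - (M:ℝ) * x + d) ^ 2
      = Bb M k x * ((k:ℝ) - (M:ℝ) * x) ^ 2 + (2 * d) * (Bb M k x * (k:ℝ))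
        + (d ^ 2 - 2 * d * ((M:ℝ) * x)) * Bb M k x := by
    intro k
    ring
  rw [Finset.sum_congr rfl fun k _ => e k, Finset.sum_add_distrib, Finset.sum_add_distrib,
    ← Finset.mul_sum, ← Finset.mul_sum, Bb_var, Bb_first, Bb_sum]
  ring

lemma bin_nonneg (m : ℕ) (j : ℤ) : 0 ≤ bin m j := by
  unfold bin
  split_ifs
  · positivity
  · exact le_rfl

lemma bp_nonneg {α x : ℝ} (hα : α ∈ Set.Icc (0:ℝ) 1) (hx : x ∈ Set.Icc (0:ℝ) 1)
    (m : ℕ) (k : ℤ) : 0 ≤ bp α m k x := by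
  obtain ⟨ha0, ha1⟩ := hα
  obtain ⟨hx0, hx1⟩ := hx
  have h1x : (0:ℝ) ≤ 1 - x := by linarith
  have h1a : (0:ℝ) ≤ 1 - α := by linarith
  unfold bp
  split_ifs
  · linarith
  · linarith
  · exact le_rfl
  · have b1 := bin_nonneg (m - 2) k
    have b2 := bin_nonneg (m - 2) (k - 2)
    have b3 := bin_nonneg m k
    have p1 : (0:ℝ) ≤ x ^ k.toNat := pow_nonneg hx0 _
    have p2 : (0:ℝ) ≤ x ^ (k.toNat - 1) := pow_nonneg hx0 _
    have p3 : (0:ℝ) ≤ (1 - x) ^ (m - 1 - k.toNat) := pow_nonneg h1x _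
    have p4 : (0:ℝ) ≤ (1 - x) ^ (m - k.toNat) := pow_nonneg h1x _
    have := mul_nonneg (mul_nonneg b1 p1) p3
    have := mul_nonneg (mul_nonneg b2 p2) p4
    have := mul_nonneg (mul_nonneg (mul_nonneg ha0 b3) p1) p4
    nlinarith [mul_nonneg h1a (add_nonneg (mul_nonneg (mul_nonneg b1 p1) p3)
      (mul_nonneg (mul_nonneg b2 p2) p4))]

lemma bp_sum_one {α x : ℝ} {m : ℕ} (hm : 1 ≤ m) :
    ∑ k ∈ Finset.range (m + 1), bp α m (k:ℤ) x = 1 := by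
  rcases eq_or_lt_of_le hm with h1 | h2
  · subst h1
    norm_num [bp, Finset.sum_range_succ]
  · have hm2 : 2 ≤ m := h2
    have h := bp_sum_f (α := α) (x := x) hm2 (fun _ => 1)
    simp only [mul_one] at h
    rw [h]
    have b1 : ∑ k ∈ Finset.range (m - 1), Bb (m - 2) k x = 1 := by
      rw [show m - 1 = (m - 2) + 1 by omega]
      exact Bb_sum _ x
    rw [b1, Bb_sum m x]
    ring

lemma bp_sum_sq {α x : ℝ} (hα : α ∈ Set.Icc (0:ℝ) 1) (hx : x ∈ Set.Icc (0:ℝ) 1)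
    {m : ℕ} (hm : 1 ≤ m) :
    ∑ k ∈ Finset.range (m + 1), bp α m (k:ℤ) x * ((k:ℝ) - (m:ℝ) * x) ^ 2
      ≤ (m:ℝ) / 2 + 8 := by
  obtain ⟨ha0, ha1⟩ := hα
  obtain ⟨hx0, hx1⟩ := hx
  have hxx : x * (1 - x) ≤ 1 / 4 := by nlinarith [sq_nonneg (1 - 2 * x)]
  rcases eq_or_lt_of_le hm with h1 | h2
  · subst h1
    norm_num [bp, Finset.sum_range_succ]
    nlinarith [sq_nonneg x, sq_nonneg (1 - x)]
  · have hm2 : 2 ≤ m := h2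
    rw [bp_sum_f hm2 (fun k => ((k:ℝ) - (m:ℝ) * x) ^ 2)]
    have hc : ((m - 2 : ℕ) : ℝ) = (m:ℝ) - 2 := by
      rw [Nat.cast_sub hm2]
      norm_num
    have hMx : (0:ℝ) ≤ ((m:ℝ) - 2) * x * (1 - x) := by
      have : (2:ℝ) ≤ (m:ℝ) := by exact_mod_cast hm2
      have h1x : (0:ℝ) ≤ 1 - x := by linarith
      have : (0:ℝ) ≤ (m:ℝ) - 2 := by linarith
      positivity
    have hMxx : ((m:ℝ) - 2) * x * (1 - x) ≤ ((m:ℝ) - 2) / 4 := by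
      have h2m : (2:ℝ) ≤ (m:ℝ) := by exact_mod_cast hm2
      nlinarith
    have hS1 : ∑ k ∈ Finset.range (m - 1), Bb (m - 2) k x * ((k:ℝ) - (m:ℝ) * x) ^ 2
        = ((m:ℝ) - 2) * x * (1 - x) + (2 * x) ^ 2 := by
      have := Bb_quad (m - 2) x (-(2 * x))
      rw [hc] at this
      rw [show m - 1 = (m - 2) + 1 by omega,
        show ((m:ℝ) - 2) * x * (1 - x) + (2 * x) ^ 2
          = ((m:ℝ) - 2) * x * (1 - x) + (-(2 * x)) ^ 2 by ring, ← this]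
      apply Finset.sum_congr rfl
      intro k _
      ring
    have hS2 : ∑ k ∈ Finset.range (m - 1), Bb (m - 2) k x * (((k + 2 : ℕ):ℝ) - (m:ℝ) * x) ^ 2
        = ((m:ℝ) - 2) * x * (1 - x) + (2 - 2 * x) ^ 2 := by
      have := Bb_quad (m - 2) x (2 - 2 * x)
      rw [hc] at this
      rw [show m - 1 = (m - 2) + 1 by omega, ← this]
      apply Finset.sum_congr rfl
      intro k _
      push_cast
      ring
    have hS3 : ∑ k ∈ Finset.range (m + 1), Bb m k x * ((k:ℝ) - (m:ℝ) * x) ^ 2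
        = (m:ℝ) * x * (1 - x) := Bb_var m x
    rw [hS1, hS2, hS3]
    have h2m : (2:ℝ) ≤ (m:ℝ) := by exact_mod_cast hm2
    have hmx : (m:ℝ) * x * (1 - x) ≤ (m:ℝ) / 4 := by nlinarith
    nlinarith [mul_nonneg (mul_nonneg (by linarith : (0:ℝ) ≤ 1 - α) (by linarith : (0:ℝ) ≤ 1 - x))
        (by nlinarith : (0:ℝ) ≤ ((m:ℝ) - 2) * x * (1 - x) + (2 * x) ^ 2),
      mul_nonneg (mul_nonneg (by linarith : (0:ℝ) ≤ 1 - α) hx0)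
        (by nlinarith : (0:ℝ) ≤ ((m:ℝ) - 2) * x * (1 - x) + (2 - 2 * x) ^ 2),
      mul_nonneg ha0 (by nlinarith : (0:ℝ) ≤ (m:ℝ) * x * (1 - x))]


lemma betaInt {a b : ℝ} (ha : 0 < a) (hb : 0 < b) :
    ∫ t in (0:ℝ)..1, t ^ (a - 1) * (1 - t) ^ (b - 1) = betaFn a b := by
  have key := Complex.Gamma_mul_Gamma_eq_betaIntegral (s := (a:ℂ)) (t := (b:ℂ))
    (by simpa using ha) (by simpa using hb)
  have hab : Real.Gamma (a + b) ≠ 0 := (Real.Gamma_pos_of_pos (by linarith)).ne'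
  have hcongr : Complex.betaIntegral a b
      = ((∫ t in (0:ℝ)..1, t ^ (a - 1) * (1 - t) ^ (b - 1) : ℝ) : ℂ) := by
    rw [Complex.betaIntegral, ← intervalIntegral.integral_ofReal]
    apply intervalIntegral.integral_congr
    intro t ht
    rw [Set.uIcc_of_le (by norm_num : (0:ℝ) ≤ 1)] at ht
    have h0 : (0:ℝ) ≤ t := ht.1
    have h1 : (0:ℝ) ≤ 1 - t := by linarith [ht.2]
    show (t:ℂ) ^ ((a:ℂ) - 1) * (1 - (t:ℂ)) ^ ((b:ℂ) - 1)
      = ((t ^ (a - 1) * (1 - t) ^ (b - 1) : ℝ) : ℂ)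
    have e : (1 - (t:ℂ)) = ((1 - t : ℝ) : ℂ) := by push_cast; ring
    rw [e, show ((a:ℂ) - 1) = ((a - 1 : ℝ) : ℂ) by push_cast; ring,
      show ((b:ℂ) - 1) = ((b - 1 : ℝ) : ℂ) by push_cast; ring,
      ← Complex.ofReal_cpow h0, ← Complex.ofReal_cpow h1, ← Complex.ofReal_mul]
  rw [hcongr] at key
  have : ((Real.Gamma a * Real.Gamma b : ℝ) : ℂ)
      = ((Real.Gamma (a + b) * ∫ t in (0:ℝ)..1, t ^ (a - 1) * (1 - t) ^ (b - 1) : ℝ) : ℂ) := by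
    push_cast [← Complex.Gamma_ofReal]
    convert key using 2 <;> push_cast <;> ring_nf
  have h2 := Complex.ofReal_inj.mp this
  unfold betaFn
  field_simp
  linarith [h2]


lemma betaInt' {p q : ℝ} (hp : 0 ≤ p) (hq : 0 ≤ q) :
    ∫ t in (0:ℝ)..1, t ^ p * (1 - t) ^ q = betaFn (p + 1) (q + 1) := by
  have h := betaInt (show (0:ℝ) < p + 1 by linarith) (show (0:ℝ) < q + 1 by linarith)
  simpa using h

lemma betaFn_succ {a b : ℝ} (ha : 0 < a) (hb : 0 < b) :
    betaFn (a + 1) b = (a / (a + b)) * betaFn a b := by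
  unfold betaFn
  rw [Real.Gamma_add_one ha.ne', show a + 1 + b = (a + b) + 1 by ring,
    Real.Gamma_add_one (by positivity : (a + b : ℝ) ≠ 0)]
  have h1 := (Real.Gamma_pos_of_pos ha).ne'
  have h2 := (Real.Gamma_pos_of_pos hb).ne'
  have h3 := (Real.Gamma_pos_of_pos (show (0:ℝ) < a + b by linarith)).ne'
  field_simp

lemma pal_cont {ρ : ℝ} (hρ : 0 < ρ) {n j : ℕ} (hj : j ≤ n) : Continuous (pal ρ n j) := by
  unfold pal
  apply Continuous.div_const
  have h1 : (0:ℝ) ≤ (j:ℝ) * ρ := by positivity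
  have h2 : (0:ℝ) ≤ ((n:ℝ) - (j:ℝ)) * ρ := by
    have : (j:ℝ) ≤ (n:ℝ) := by exact_mod_cast hj
    nlinarith
  exact (Real.continuous_rpow_const h1).mul
    ((Real.continuous_rpow_const h2).comp (continuous_const.sub continuous_id))

lemma pal_nonneg {ρ : ℝ} (hρ : 0 < ρ) {n j : ℕ} (hj : j ≤ n) {t : ℝ}
    (ht : t ∈ Set.Icc (0:ℝ) 1) : 0 ≤ pal ρ n j t := by
  unfold pal
  have hb : (0:ℝ) < betaFn ((j:ℝ) * ρ + 1) (((n:ℝ) - (j:ℝ)) * ρ + 1) := by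
    apply betaFn_pos <;> [positivity; skip]
    have : (j:ℝ) ≤ (n:ℝ) := by exact_mod_cast hj
    nlinarith
  have := Real.rpow_nonneg ht.1 ((j:ℝ) * ρ)
  have := Real.rpow_nonneg (by linarith [ht.2] : (0:ℝ) ≤ 1 - t) (((n:ℝ) - (j:ℝ)) * ρ)
  positivity

lemma pal_moment {ρ : ℝ} (hρ : 0 < ρ) {n j : ℕ} (hj : j ≤ n) (i : ℕ) :
    ∫ t in (0:ℝ)..1, pal ρ n j t * t ^ i
      = betaFn ((j:ℝ) * ρ + (i:ℝ) + 1) (((n:ℝ) - (j:ℝ)) * ρ + 1)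
        / betaFn ((j:ℝ) * ρ + 1) (((n:ℝ) - (j:ℝ)) * ρ + 1) := by
  have hjn : (j:ℝ) ≤ (n:ℝ) := by exact_mod_cast hj
  have h1 : (0:ℝ) ≤ (j:ℝ) * ρ := by positivity
  have h2 : (0:ℝ) ≤ ((n:ℝ) - (j:ℝ)) * ρ := by nlinarith
  have hcongr : ∀ t ∈ Set.uIcc (0:ℝ) 1,
      pal ρ n j t * t ^ i
        = t ^ ((j:ℝ) * ρ + (i:ℝ)) * (1 - t) ^ (((n:ℝ) - (j:ℝ)) * ρ)
          / betaFn ((j:ℝ) * ρ + 1) (((n:ℝ) - (j:ℝ)) * ρ + 1) := by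
    intro t ht
    rw [Set.uIcc_of_le (by norm_num : (0:ℝ) ≤ 1)] at ht
    unfold pal
    rw [← Real.rpow_natCast t i]
    rcases eq_or_ne ((j:ℝ) * ρ + (i:ℝ)) 0 with h | h
    · have hi0 : (i:ℝ) = 0 := by
        have : (0:ℝ) ≤ (i:ℝ) := by positivity
        linarith
      have hj0 : (j:ℝ) * ρ = 0 := by linarith [h, hi0]
      rw [h, hj0, hi0, Real.rpow_zero]
      ring
    · rw [Real.rpow_add' ht.1 h]
      ring
  rw [intervalIntegral.integral_congr hcongr, intervalIntegral.integral_div,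
    betaInt' (by positivity) h2]

lemma pal_int_one {ρ : ℝ} (hρ : 0 < ρ) {n j : ℕ} (hj : j ≤ n) :
    ∫ t in (0:ℝ)..1, pal ρ n j t = 1 := by
  have h := pal_moment hρ hj 0
  have hjn : (j:ℝ) ≤ (n:ℝ) := by exact_mod_cast hj
  simp only [Nat.cast_zero, add_zero, pow_zero, mul_one] at h
  rw [h, div_self (betaFn_pos (by positivity) (by nlinarith)).ne']

lemma pal_E1 {ρ : ℝ} (hρ : 0 < ρ) {n j : ℕ} (hj : j ≤ n) :
    ∫ t in (0:ℝ)..1, pal ρ n j t * t ^ 1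
      = ((j:ℝ) * ρ + 1) / ((n:ℝ) * ρ + 2) := by
  have h := pal_moment hρ hj 1
  have hjn : (j:ℝ) ≤ (n:ℝ) := by exact_mod_cast hj
  have ha : (0:ℝ) < (j:ℝ) * ρ + 1 := by positivity
  have hb : (0:ℝ) < ((n:ℝ) - (j:ℝ)) * ρ + 1 := by nlinarith
  push_cast at h
  rw [betaFn_succ ha hb] at h
  rw [h, mul_div_assoc, div_self (betaFn_pos ha hb).ne', mul_one]
  congr 1
  ring

lemma pal_E2 {ρ : ℝ} (hρ : 0 < ρ) {n j : ℕ} (hj : j ≤ n) :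
    ∫ t in (0:ℝ)..1, pal ρ n j t * t ^ 2
      = ((j:ℝ) * ρ + 2) * ((j:ℝ) * ρ + 1) / (((n:ℝ) * ρ + 3) * ((n:ℝ) * ρ + 2)) := by
  have h := pal_moment hρ hj 2
  have hjn : (j:ℝ) ≤ (n:ℝ) := by exact_mod_cast hj
  have ha : (0:ℝ) < (j:ℝ) * ρ + 1 := by positivity
  have ha' : (0:ℝ) < (j:ℝ) * ρ + 1 + 1 := by positivity
  have hb : (0:ℝ) < ((n:ℝ) - (j:ℝ)) * ρ + 1 := by nlinarith
  push_cast at h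
  rw [show (j:ℝ) * ρ + 2 + 1 = ((j:ℝ) * ρ + 1 + 1) + 1 by ring, betaFn_succ ha' hb,
    betaFn_succ ha hb] at h
  rw [h]
  have hB := (betaFn_pos ha hb).ne'
  have hd1 : (j:ℝ) * ρ + 1 + 1 + (((n:ℝ) - (j:ℝ)) * ρ + 1) ≠ 0 := by nlinarith
  have hd2 : (j:ℝ) * ρ + 1 + (((n:ℝ) - (j:ℝ)) * ρ + 1) ≠ 0 := by nlinarith
  have hd3 : ((n:ℝ) * ρ + 3) ≠ 0 := by nlinarith
  have hd4 : ((n:ℝ) * ρ + 2) ≠ 0 := by nlinarith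
  rw [mul_div_assoc, mul_div_cancel_right₀ _ hB, div_mul_div_comm]
  congr 1 <;> ring

lemma pal_J {ρ : ℝ} (hρ : 0 < ρ) {n j : ℕ} (hj : j ≤ n) (x : ℝ) :
    ∫ t in (0:ℝ)..1, pal ρ n j t * (t - x) ^ 2
      = ((j:ℝ) * ρ + 2) * ((j:ℝ) * ρ + 1) / (((n:ℝ) * ρ + 3) * ((n:ℝ) * ρ + 2))
        - 2 * x * (((j:ℝ) * ρ + 1) / ((n:ℝ) * ρ + 2)) + x ^ 2 := by
  have hc := pal_cont hρ hj
  have i2 : IntervalIntegrable (fun t => pal ρ n j t * t ^ 2) volume 0 1 :=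
    (hc.mul (continuous_pow 2)).intervalIntegrable 0 1
  have i1 : IntervalIntegrable (fun t => 2 * x * (pal ρ n j t * t ^ 1)) volume 0 1 :=
    (continuous_const.mul (hc.mul (continuous_pow 1))).intervalIntegrable 0 1
  have i0 : IntervalIntegrable (fun t => x ^ 2 * pal ρ n j t) volume 0 1 :=
    (continuous_const.mul hc).intervalIntegrable 0 1
  have e : (fun t => pal ρ n j t * (t - x) ^ 2)
      = fun t => (pal ρ n j t * t ^ 2 - 2 * x * (pal ρ n j t * t ^ 1)) + x ^ 2 * pal ρ n j t := by
    funext t; ring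
  rw [e, intervalIntegral.integral_add (i2.sub i1) i0, intervalIntegral.integral_sub i2 i1,
    intervalIntegral.integral_const_mul, intervalIntegral.integral_const_mul,
    pal_E1 hρ hj, pal_E2 hρ hj, pal_int_one hρ hj, mul_one]

lemma I_le_J {ρ : ℝ} (hρ : 0 < ρ) {n j : ℕ} (hj : j ≤ n) (hn : 1 ≤ n) {x : ℝ}
    (hx : x ∈ Set.Icc (0:ℝ) 1) :
    ∫ t in (0:ℝ)..1, pal ρ n j t * |t - x|
      ≤ Real.sqrt n / 2 * (∫ t in (0:ℝ)..1, pal ρ n j t * (t - x) ^ 2)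
        + 1 / (2 * Real.sqrt n) := by
  have hr : (0:ℝ) < Real.sqrt n := Real.sqrt_pos.mpr (by exact_mod_cast hn)
  set r := Real.sqrt n with hrdef
  have hc := pal_cont hρ hj
  have iabs : IntervalIntegrable (fun t => pal ρ n j t * |t - x|) volume 0 1 :=
    (hc.mul (continuous_id.sub continuous_const).abs).intervalIntegrable 0 1
  have i2 : IntervalIntegrable (fun t => r / 2 * (pal ρ n j t * (t - x) ^ 2)) volume 0 1 :=
    (continuous_const.mul (hc.mul ((continuous_id.sub continuous_const).pow 2))).intervalIntegrable 0 1
  have i0 : IntervalIntegrable (fun t => 1 / (2 * r) * pal ρ n j t) volume 0 1 :=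
    (continuous_const.mul hc).intervalIntegrable 0 1
  have hmono := intervalIntegral.integral_mono_on (by norm_num : (0:ℝ) ≤ 1) iabs (i2.add i0) ?_
  · calc ∫ t in (0:ℝ)..1, pal ρ n j t * |t - x|
        ≤ ∫ t in (0:ℝ)..1, (r / 2 * (pal ρ n j t * (t - x) ^ 2)
            + 1 / (2 * r) * pal ρ n j t) := hmono
      _ = r / 2 * (∫ t in (0:ℝ)..1, pal ρ n j t * (t - x) ^ 2) + 1 / (2 * r) := by
          rw [intervalIntegral.integral_add i2 i0,
            intervalIntegral.integral_const_mul, intervalIntegral.integral_const_mul,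
            pal_int_one hρ hj, mul_one]
  · intro t ht
    have hp := pal_nonneg hρ hj ht
    have key : |t - x| ≤ r / 2 * (t - x) ^ 2 + 1 / (2 * r) := by
      rw [← sq_abs (t - x), ← sub_nonneg]
      have h1 : r / 2 * |t - x| ^ 2 + 1 / (2 * r) - |t - x|
          = (r * |t - x| - 1) ^ 2 / (2 * r) := by
        field_simp
        ring
      rw [h1]
      positivity
    calc pal ρ n j t * |t - x| ≤ pal ρ n j t * (r / 2 * (t - x) ^ 2 + 1 / (2 * r)) :=
          mul_le_mul_of_nonneg_left key hp
      _ = r / 2 * (pal ρ n j t * (t - x) ^ 2) + 1 / (2 * r) * pal ρ n j t := by ring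

lemma J_bound {ρ : ℝ} (hρ : 0 < ρ) {n j : ℕ} (hj : j ≤ n) {x : ℝ} :
    ∫ t in (0:ℝ)..1, pal ρ n j t * (t - x) ^ 2
      ≤ 1 / (4 * ((n:ℝ) * ρ + 2))
        + ((j:ℝ) * ρ + 1 - x * ((n:ℝ) * ρ + 2)) ^ 2 / ((n:ℝ) * ρ + 2) ^ 2 := by
  rw [pal_J hρ hj x]
  have hjn : (j:ℝ) ≤ (n:ℝ) := by exact_mod_cast hj
  have ha : (0:ℝ) < (j:ℝ) * ρ + 1 := by positivity
  have hs : (0:ℝ) < (n:ℝ) * ρ + 2 := by positivity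
  have hs3 : (0:ℝ) < (n:ℝ) * ρ + 3 := by positivity
  have e1 : ((j:ℝ) * ρ + 2) * ((j:ℝ) * ρ + 1) / (((n:ℝ) * ρ + 3) * ((n:ℝ) * ρ + 2))
        - 2 * x * (((j:ℝ) * ρ + 1) / ((n:ℝ) * ρ + 2)) + x ^ 2
      = ((j:ℝ) * ρ + 1) * (((n:ℝ) * ρ + 2) - ((j:ℝ) * ρ + 1))
          / (((n:ℝ) * ρ + 2) ^ 2 * ((n:ℝ) * ρ + 3))
        + ((j:ℝ) * ρ + 1 - x * ((n:ℝ) * ρ + 2)) ^ 2 / ((n:ℝ) * ρ + 2) ^ 2 := by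
    field_simp
    ring
  rw [e1]
  have e2 : ((j:ℝ) * ρ + 1) * (((n:ℝ) * ρ + 2) - ((j:ℝ) * ρ + 1))
        / (((n:ℝ) * ρ + 2) ^ 2 * ((n:ℝ) * ρ + 3))
      ≤ 1 / (4 * ((n:ℝ) * ρ + 2)) := by
    rw [div_le_div_iff₀ (by positivity) (by positivity)]
    nlinarith [sq_nonneg (((n:ℝ) * ρ + 2) - 2 * ((j:ℝ) * ρ + 1)), sq_nonneg ((n:ℝ) * ρ + 2)]
  linarith

set_option maxHeartbeats 2000000 in
lemma main_bound {α ρ : ℝ} (hα : α ∈ Set.Icc (0:ℝ) 1) (hρ : 0 < ρ) {n d : ℕ} (hd : d ≤ 1)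
    (hn : 2 ≤ n) {x : ℝ} (hx : x ∈ Set.Icc (0:ℝ) 1) :
    ∑ k ∈ Finset.range n, bp α (n - 1) (k:ℤ) x * ∫ t in (0:ℝ)..1, pal ρ n (k + d) t * |t - x|
      ≤ (1 / (8 * ρ) + (ρ + 1) ^ 2 / (2 * ρ ^ 2) + 5) / Real.sqrt n := by
  set m := n - 1 with hmdef
  have hmn : m + 1 = n := by omega
  have hm1 : 1 ≤ m := by omega
  have hn2 : (2:ℝ) ≤ (n:ℝ) := by exact_mod_cast hn
  have hmc : (m:ℝ) = (n:ℝ) - 1 := by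
    rw [hmdef, Nat.cast_sub (by omega)]
    norm_num
  have hr : (0:ℝ) < Real.sqrt n := Real.sqrt_pos.mpr (by linarith)
  set r := Real.sqrt n with hrdef
  have hr2 : r ^ 2 = (n:ℝ) := Real.sq_sqrt (by linarith)
  set s := (n:ℝ) * ρ + 2 with hsdef
  have hs : (0:ℝ) < s := by positivity
  set c1 := r / 2 * (1 / (4 * s) + 2 * (ρ + 1) ^ 2 / s ^ 2) + 1 / (2 * r) with hc1def
  set c2 := r * ρ ^ 2 / s ^ 2 with hc2def
  have hc2 : (0:ℝ) ≤ c2 := by positivity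
  have hs' := hs.ne'
  have hr' := hr.ne'
  clear_value r s c1 c2
  -- per-k bound on the integral
  have key : ∀ k ∈ Finset.range n,
      bp α m (k:ℤ) x * ∫ t in (0:ℝ)..1, pal ρ n (k + d) t * |t - x|
        ≤ bp α m (k:ℤ) x * (c1 + c2 * ((k:ℝ) - (m:ℝ) * x) ^ 2) := by
    intro k hk
    have hkn : k < n := Finset.mem_range.mp hk
    have hjn : k + d ≤ n := by omega
    apply mul_le_mul_of_nonneg_left _ (bp_nonneg hα hx m (k:ℤ))
    have h1 := I_le_J hρ hjn (by omega : 1 ≤ n) hx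
    rw [← hrdef] at h1
    have h2 := J_bound (x := x) hρ hjn
    have hnum : (((k + d : ℕ):ℝ) * ρ + 1 - x * ((n:ℝ) * ρ + 2)) ^ 2
        ≤ 2 * ρ ^ 2 * ((k:ℝ) - (m:ℝ) * x) ^ 2 + 2 * (ρ + 1) ^ 2 := by
      have hd1 : (d:ℝ) ≤ 1 := by exact_mod_cast hd
      have hd0 : (0:ℝ) ≤ (d:ℝ) := by positivity
      push_cast
      rw [hmc]
      set u := (k:ℝ) - ((n:ℝ) - 1) * x with hudef
      have hee : ((k:ℝ) + (d:ℝ)) * ρ + 1 - x * ((n:ℝ) * ρ + 2)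
          = ρ * u + ((d:ℝ) * ρ + 1 - (ρ + 2) * x) := by
        rw [hudef]
        ring
      rw [hee]
      set c := (d:ℝ) * ρ + 1 - (ρ + 2) * x with hcdef
      have hx0 := hx.1
      have hx1 := hx.2
      have hp1 : 0 ≤ ρ + 1 - c := by
        rw [hcdef]
        nlinarith
      have hp2 : 0 ≤ ρ + 1 + c := by
        rw [hcdef]
        nlinarith
      have hcsq : c ^ 2 ≤ (ρ + 1) ^ 2 := by nlinarith [mul_nonneg hp1 hp2]
      nlinarith [sq_nonneg (ρ * u - c)]
    calc ∫ t in (0:ℝ)..1, pal ρ n (k + d) t * |t - x|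
        ≤ r / 2 * (∫ t in (0:ℝ)..1, pal ρ n (k + d) t * (t - x) ^ 2) + 1 / (2 * r) := h1
      _ ≤ r / 2 * (1 / (4 * s)
            + (2 * ρ ^ 2 * ((k:ℝ) - (m:ℝ) * x) ^ 2 + 2 * (ρ + 1) ^ 2) / s ^ 2) + 1 / (2 * r) := by
          have hQ : (∫ t in (0:ℝ)..1, pal ρ n (k + d) t * (t - x) ^ 2)
              ≤ 1 / (4 * s)
                + (2 * ρ ^ 2 * ((k:ℝ) - (m:ℝ) * x) ^ 2 + 2 * (ρ + 1) ^ 2) / s ^ 2 := by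
            refine h2.trans ?_
            rw [hsdef]
            gcongr
          have hmul := mul_le_mul_of_nonneg_left hQ (by positivity : (0:ℝ) ≤ r / 2)
          linarith
      _ = c1 + c2 * ((k:ℝ) - (m:ℝ) * x) ^ 2 := by
          rw [hc1def, hc2def]
          field_simp
          ring
  -- sum the bounds
  have hsum1 : ∑ k ∈ Finset.range n, bp α m (k:ℤ) x = 1 := by
    rw [← hmn]
    exact bp_sum_one hm1
  have hsum2 : ∑ k ∈ Finset.range n, bp α m (k:ℤ) x * ((k:ℝ) - (m:ℝ) * x) ^ 2
      ≤ (m:ℝ) / 2 + 8 := by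
    rw [← hmn]
    exact bp_sum_sq hα hx hm1
  have step : ∑ k ∈ Finset.range n, bp α m (k:ℤ) x * ∫ t in (0:ℝ)..1, pal ρ n (k + d) t * |t - x|
      ≤ c1 + c2 * ((m:ℝ) / 2 + 8) := by
    calc ∑ k ∈ Finset.range n, bp α m (k:ℤ) x * ∫ t in (0:ℝ)..1, pal ρ n (k + d) t * |t - x|
        ≤ ∑ k ∈ Finset.range n, bp α m (k:ℤ) x * (c1 + c2 * ((k:ℝ) - (m:ℝ) * x) ^ 2) :=
          Finset.sum_le_sum key
      _ = c1 * (∑ k ∈ Finset.range n, bp α m (k:ℤ) x)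
          + c2 * ∑ k ∈ Finset.range n, bp α m (k:ℤ) x * ((k:ℝ) - (m:ℝ) * x) ^ 2 := by
          rw [Finset.mul_sum, Finset.mul_sum, ← Finset.sum_add_distrib]
          apply Finset.sum_congr rfl
          intro k _
          ring
      _ ≤ c1 + c2 * ((m:ℝ) / 2 + 8) := by
          rw [hsum1, mul_one]
          exact add_le_add_right (mul_le_mul_of_nonneg_left hsum2 hc2) c1
  -- final numeric estimate
  have hsn : ρ * (n:ℝ) ≤ s := by rw [hsdef]; nlinarith
  have hss : 2 * ρ ^ 2 * (n:ℝ) ≤ s ^ 2 := by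
    rw [hsdef]
    nlinarith [sq_nonneg ρ, mul_nonneg (mul_nonneg hρ.le hρ.le) (by linarith : (0:ℝ) ≤ (n:ℝ) - 2),
      mul_pos hρ (by linarith : (0:ℝ) < (n:ℝ))]
  have A1 : r / 2 * (1 / (4 * s)) ≤ 1 / (8 * ρ * r) := by
    rw [show r / 2 * (1 / (4 * s)) = r / (8 * s) by ring,
      div_le_div_iff₀ (by positivity) (by positivity)]
    nlinarith [hr2]
  have A2 : r / 2 * (2 * (ρ + 1) ^ 2 / s ^ 2) ≤ (ρ + 1) ^ 2 / (2 * ρ ^ 2 * r) := by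
    rw [show r / 2 * (2 * (ρ + 1) ^ 2 / s ^ 2) = r * (ρ + 1) ^ 2 / s ^ 2 by ring,
      div_le_div_iff₀ (by positivity) (by positivity),
      show r * (ρ + 1) ^ 2 * (2 * ρ ^ 2 * r) = (ρ + 1) ^ 2 * (2 * ρ ^ 2 * (n:ℝ)) from by
        rw [← hr2]; ring]
    exact mul_le_mul_of_nonneg_left hss (sq_nonneg (ρ + 1))
  have A4 : c2 * ((m:ℝ) / 2 + 8) ≤ 9 / (2 * r) := by
    rw [hc2def, show r * ρ ^ 2 / s ^ 2 * ((m:ℝ) / 2 + 8) = r * ρ ^ 2 * ((m:ℝ) / 2 + 8) / s ^ 2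
        by ring, div_le_div_iff₀ (by positivity) (by positivity)]
    rw [hmc, hsdef]
    nlinarith [hr2, sq_nonneg ρ, mul_pos hρ (by linarith : (0:ℝ) < (n:ℝ)),
      mul_nonneg (mul_nonneg (by linarith : (0:ℝ) ≤ (n:ℝ)) (sq_nonneg ρ))
        (by linarith : (0:ℝ) ≤ (n:ℝ) - 2)]
  have hC : 1 / (8 * ρ * r) + (ρ + 1) ^ 2 / (2 * ρ ^ 2 * r) + 1 / (2 * r) + 9 / (2 * r)
      = (1 / (8 * ρ) + (ρ + 1) ^ 2 / (2 * ρ ^ 2) + 5) / r := by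
    field_simp
    ring
  have : c1 + c2 * ((m:ℝ) / 2 + 8)
      ≤ (1 / (8 * ρ) + (ρ + 1) ^ 2 / (2 * ρ ^ 2) + 5) / r := by
    rw [← hC, hc1def]
    have expand : r / 2 * (1 / (4 * s) + 2 * (ρ + 1) ^ 2 / s ^ 2) + 1 / (2 * r)
        = r / 2 * (1 / (4 * s)) + r / 2 * (2 * (ρ + 1) ^ 2 / s ^ 2) + 1 / (2 * r) := by ring
    rw [expand]
    linarith [A1, A2, A4]
  linarith [step, this]

theorem stmt_8 (α ρ : ℝ) (hα : α ∈ Set.Icc (0:ℝ) 1) (hρ : 0 < ρ) :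
    ∃ C > (0:ℝ), ∀ n : ℕ, 2 ≤ n → ∀ x ∈ Set.Icc (0:ℝ) 1,
      (∑ k ∈ Finset.range n,
          bp α (n - 1) (k : ℤ) x * ∫ t in (0:ℝ)..1, pal ρ n k t * |t - x|)
        ≤ C / Real.sqrt n ∧
      (∑ k ∈ Finset.range n,
          bp α (n - 1) (k : ℤ) x * ∫ t in (0:ℝ)..1, pal ρ n (k + 1) t * |t - x|)
        ≤ C / Real.sqrt n := by
  refine ⟨1 / (8 * ρ) + (ρ + 1) ^ 2 / (2 * ρ ^ 2) + 5, by positivity, ?_⟩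
  intro n hn x hx
  constructor
  · have h := main_bound (d := 0) hα hρ (Nat.zero_le 1) hn hx
    simpa using h
  · exact main_bound hα hρ (le_refl 1) hn hx
end
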